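/- Let {θ^r} be a sequence of parameters such that for all 1 ≤ j ≤ k the mixing weights satisfy π_j^r → π_j with π_j > 0, the dispersion matrices satisfy Σ_j^r → Σ_j with Σ_j real symmetric positive definite, and for some 1 ≤ g < k the means satisfy μ_j^r → μ_j ∈ ℝ^p for j ≤ g and ‖μ_j^r‖ → ∞ for j > g. Then for any probability distribution P on ℝ^p, E_P[ Σ_{j=g+1}^k Z_j(X, θ^r) ] → 0 as r → ∞. -/

import Mathlib

open MeasureTheory Matrix Filter Topology Finset Real

noncomputable section

/-- The `p`-variate normal density `φ_p(x, μ, Σ)`. -/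
def mvnpdf (p : ℕ) (x μ : Fin p → ℝ) (S : Matrix (Fin p) (Fin p) ℝ) : ℝ :=
  (2 * π) ^ (-(p : ℝ) / 2) * S.det ^ (-(1 : ℝ) / 2) *
    Real.exp (-(1 / 2) * ((x - μ) ⬝ᵥ (S⁻¹ *ᵥ (x - μ))))

/-- A (generalized) mixture parameter `θ = (π₁,…,π_k, μ₁,…,μ_k, Σ₁,…,Σ_k)`. -/
abbrev MixParam (p k : ℕ) :=
  (Fin k → ℝ) × (Fin k → Fin p → ℝ) × (Fin k → Matrix (Fin p) (Fin p) ℝ)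

/-- `D_j(x, θ) = π_j φ_p(x, μ_j, Σ_j)`. -/
def Dj (p k : ℕ) (θ : MixParam p k) (x : Fin p → ℝ) (j : Fin k) : ℝ :=
  θ.1 j * mvnpdf p x (θ.2.1 j) (θ.2.2 j)

/-- `D_j(x,θ) = D(x,θ) = max_i D_i(x,θ)`, i.e. the `j`-th component attains the maximum. -/
def IsArgMax (p k : ℕ) (θ : MixParam p k) (x : Fin p → ℝ) (j : Fin k) : Prop :=
  ∀ i, Dj p k θ x i ≤ Dj p k θ x j

open Classical in
/-- The assignment function `Z_j(x,θ) = 1{D_j(x,θ) = D(x,θ)}`. -/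
def Zj (p k : ℕ) (θ : MixParam p k) (x : Fin p → ℝ) (j : Fin k) : ℝ :=
  if IsArgMax p k θ x j then 1 else 0

/-- `∫_{ℝ^p} φ_p(x, μ, Σ)^{1+β} dx`. -/
def Jint (p : ℕ) (β : ℝ) (μ : Fin p → ℝ) (S : Matrix (Fin p) (Fin p) ℝ) : ℝ :=
  ∫ x : Fin p → ℝ, mvnpdf p x μ S ^ (1 + β)

open Classical in
/-- The integrand `m_θ(x)` of the pseudo β-likelihood, with the convention that a summand
is `0` whenever `Z_j(x,θ) = 0`. -/
def mfun (p k : ℕ) (β : ℝ) (θ : MixParam p k) (x : Fin p → ℝ) : ℝ :=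
  ∑ j : Fin k,
    if IsArgMax p k θ x j then
      Real.log (θ.1 j) + (1 / β) * mvnpdf p x (θ.2.1 j) (θ.2.2 j) ^ β
        - (1 / (1 + β)) * Jint p β (θ.2.1 j) (θ.2.2 j)
    else 0

/-- The pseudo β-likelihood `L_β(θ, P) = E_P[m_θ(X)]`. -/
def Lbeta (p k : ℕ) (β : ℝ) (θ : MixParam p k) (P : Measure (Fin p → ℝ)) : ℝ :=
  ∫ x, mfun p k β θ x ∂P

/-- The empirical pseudo β-likelihood `L_β(θ, F_n)` based on observations `xs 0, …, xs (n-1)`. -/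
def Lemp (p k : ℕ) (β : ℝ) (θ : MixParam p k) (n : ℕ) (xs : ℕ → Fin p → ℝ) : ℝ :=
  (1 / (n : ℝ)) * ∑ i ∈ Finset.range n, mfun p k β θ (xs i)

/-- `θ` is a genuine mixture parameter: weights in `[0,1]` summing to `1`, and symmetric
positive definite dispersion matrices. -/
def IsMixParam (p k : ℕ) (θ : MixParam p k) : Prop :=
  (∀ j, 0 ≤ θ.1 j ∧ θ.1 j ≤ 1) ∧ (∑ j, θ.1 j) = 1 ∧ ∀ j, (θ.2.2 j).PosDef

/-- The constrained parameter space `Θ_C`: every eigenvalue of every `Σ_j` is at least `c₁`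
(NS constraint) and the ratio of any two eigenvalues is at most `c` (ER constraint `M/m ≤ c`). -/
def InThetaC (p k : ℕ) (c c₁ : ℝ) (θ : MixParam p k) : Prop :=
  IsMixParam p k θ ∧
    (∀ j (h : (θ.2.2 j).IsHermitian) i, c₁ ≤ h.eigenvalues i) ∧
    (∀ j (h : (θ.2.2 j).IsHermitian) i j' (h' : (θ.2.2 j').IsHermitian) i',
      h.eigenvalues i ≤ c * h'.eigenvalues i')

/-- The `k`-component `p`-variate normal mixture measure `Σ_j w_j N_p(μ_j, Σ_j)`. -/
def mixMeasure (p k : ℕ) (w : Fin k → ℝ) (μ : Fin k → Fin p → ℝ)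
    (S : Fin k → Matrix (Fin p) (Fin p) ℝ) : Measure (Fin p → ℝ) :=
  volume.withDensity fun x => ENNReal.ofReal (∑ j, w j * mvnpdf p x (μ j) (S j))

/-- Assumption 1: `max_j π⁰_j ≥ (1+k⁰) β/(1+β)^{1+p/2}` for some `k⁰ > 0`. -/
def Assumption1 (p k : ℕ) (β : ℝ) (w0 : Fin k → ℝ) : Prop :=
  ∃ k0 > 0, ∃ j0 : Fin k, (∀ j, w0 j ≤ w0 j0) ∧
    (1 + k0) * β / (1 + β) ^ (1 + (p : ℝ) / 2) ≤ w0 j0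

/-- The Euclidean distance on the parameter space
`ℝ^k × (ℝ^p)^k × (ℝ^{p×p})^k`. -/
def paramDist (p k : ℕ) (θ θ' : MixParam p k) : ℝ :=
  Real.sqrt ((∑ j, (θ.1 j - θ'.1 j) ^ 2) + (∑ j, ∑ i, (θ.2.1 j i - θ'.2.1 j i) ^ 2)
    + (∑ j, ∑ i, ∑ i', (θ.2.2 j i i' - θ'.2.2 j i i') ^ 2))

end


section Helpers

lemma quad_smul (p : ℕ) (A : Matrix (Fin p) (Fin p) ℝ) (a : ℝ) (w : Fin p → ℝ) :
    (a • w) ⬝ᵥ A *ᵥ (a • w) = a ^ 2 * (w ⬝ᵥ A *ᵥ w) := by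
  rw [Matrix.mulVec_smul, smul_dotProduct, dotProduct_smul, smul_eq_mul,
    smul_eq_mul]
  ring

lemma quad_lower_bound {p : ℕ} (hp : 0 < p) {A : Matrix (Fin p) (Fin p) ℝ}
    (hA : A.PosDef) : ∃ c > 0, ∀ v : Fin p → ℝ, c * (∑ i, v i ^ 2) ≤ v ⬝ᵥ A *ᵥ v := by
  set E := EuclideanSpace ℝ (Fin p)
  have hQcont : Continuous fun v : E => (v : Fin p → ℝ) ⬝ᵥ A *ᵥ v := by
    have h1 : Continuous fun v : Fin p → ℝ => v ⬝ᵥ A *ᵥ v := by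
      simp only [dotProduct, Matrix.mulVec]
      exact continuous_finset_sum _ fun i _ =>
        (continuous_apply i).mul (continuous_finset_sum _ fun j _ =>
          continuous_const.mul (continuous_apply j))
    exact h1.comp (PiLp.continuous_ofLp 2 fun _ : Fin p => ℝ)
  have hne : (Metric.sphere (0 : E) 1).Nonempty := by
    refine ⟨EuclideanSpace.single ⟨0, hp⟩ (1 : ℝ), ?_⟩
    simp only [mem_sphere_zero_iff_norm]
    rw [EuclideanSpace.norm_single]
    norm_num
  obtain ⟨u, hu, hmin'⟩ := (isCompact_sphere (0 : E) 1).exists_isMinOn hne hQcont.continuousOn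
  have hune : (u : Fin p → ℝ) ≠ 0 := by
    intro h
    have : ‖u‖ = 1 := mem_sphere_zero_iff_norm.mp hu
    rw [show u = 0 from WithLp.ofLp_injective 2 h] at this
    simp at this
  have hc : 0 < (u : Fin p → ℝ) ⬝ᵥ A *ᵥ u := by
    have := hA.dotProduct_mulVec_pos hune
    simpa using this
  refine ⟨_, hc, fun v => ?_⟩
  by_cases hv : v = 0
  · simp [hv]
  · set vE : E := WithLp.toLp 2 v with hvE
    have hvEne : vE ≠ 0 := fun h => hv (by simpa [hvE] using congrArg WithLp.ofLp h)
    have hn : 0 < ‖vE‖ := norm_pos_iff.mpr hvEne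
    have husph : (‖vE‖⁻¹ • vE) ∈ Metric.sphere (0 : E) 1 := by
      simp [norm_smul, abs_of_pos (inv_pos.mpr hn), inv_mul_cancel₀ hn.ne']
    have hq : ((‖vE‖⁻¹ • vE : E) : Fin p → ℝ) ⬝ᵥ A *ᵥ ((‖vE‖⁻¹ • vE : E) : Fin p → ℝ)
        = ‖vE‖⁻¹ ^ 2 * (v ⬝ᵥ A *ᵥ v) := quad_smul p A _ v
    have hle : (u : Fin p → ℝ) ⬝ᵥ A *ᵥ u ≤ ‖vE‖⁻¹ ^ 2 * (v ⬝ᵥ A *ᵥ v) := hq ▸ hmin' husph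
    have hsum : (∑ i, v i ^ 2) = ‖vE‖ ^ 2 := by
      rw [EuclideanSpace.norm_eq, Real.sq_sqrt (by positivity)]
      simp [sq_abs, hvE]
    rw [hsum]
    have h2 : 0 < ‖vE‖ ^ 2 := by positivity
    calc ((u : Fin p → ℝ) ⬝ᵥ A *ᵥ u) * ‖vE‖ ^ 2 ≤ (‖vE‖⁻¹ ^ 2 * (v ⬝ᵥ A *ᵥ v)) * ‖vE‖ ^ 2 := by
          nlinarith
      _ = v ⬝ᵥ A *ᵥ v := by field_simp

lemma continuous_mvnpdf_x (p : ℕ) (μ : Fin p → ℝ) (S : Matrix (Fin p) (Fin p) ℝ) :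
    Continuous fun x => mvnpdf p x μ S := by
  unfold mvnpdf
  refine continuous_const.mul (Real.continuous_exp.comp (continuous_const.mul ?_))
  simp only [dotProduct, Matrix.mulVec, Pi.sub_apply]
  exact continuous_finset_sum _ fun i _ =>
    (((continuous_apply i).sub continuous_const).mul (continuous_finset_sum _ fun j _ =>
      continuous_const.mul ((continuous_apply j).sub continuous_const)))

lemma tendsto_quad {p : ℕ} {μr : ℕ → Fin p → ℝ} {Ar : ℕ → Matrix (Fin p) (Fin p) ℝ}
    {μ : Fin p → ℝ} {A : Matrix (Fin p) (Fin p) ℝ}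
    (hμ : Tendsto μr atTop (𝓝 μ)) (hA : Tendsto Ar atTop (𝓝 A)) (x : Fin p → ℝ) :
    Tendsto (fun r => (x - μr r) ⬝ᵥ (Ar r *ᵥ (x - μr r))) atTop
      (𝓝 ((x - μ) ⬝ᵥ (A *ᵥ (x - μ)))) := by
  have hμi : ∀ i, Tendsto (fun r => μr r i) atTop (𝓝 (μ i)) := by
    intro i; exact (tendsto_pi_nhds.mp hμ) i
  have hAij : ∀ i j, Tendsto (fun r => Ar r i j) atTop (𝓝 (A i j)) := by
    intro i j; exact (tendsto_pi_nhds.mp ((tendsto_pi_nhds.mp hA) i)) j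
  simp only [dotProduct, Matrix.mulVec, Pi.sub_apply]
  refine tendsto_finset_sum _ fun i _ => ?_
  exact (tendsto_const_nhds.sub (hμi i)).mul
    (tendsto_finset_sum _ fun j _ => (hAij i j).mul (tendsto_const_nhds.sub (hμi j)))

lemma tendsto_inv_matrix {p : ℕ} {Sr : ℕ → Matrix (Fin p) (Fin p) ℝ}
    {S : Matrix (Fin p) (Fin p) ℝ} (hdet : S.det ≠ 0) (hS : Tendsto Sr atTop (𝓝 S)) :
    Tendsto (fun r => (Sr r)⁻¹) atTop (𝓝 S⁻¹) := by
  have h : ContinuousAt Ring.inverse S.det := by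
    rw [Ring.inverse_eq_inv']
    exact continuousAt_inv₀ hdet
  exact ((continuousAt_matrix_inv S h).tendsto).comp hS

lemma tendsto_det {p : ℕ} {Sr : ℕ → Matrix (Fin p) (Fin p) ℝ}
    {S : Matrix (Fin p) (Fin p) ℝ} (hS : Tendsto Sr atTop (𝓝 S)) :
    Tendsto (fun r => (Sr r).det) atTop (𝓝 S.det) :=
  ((Continuous.matrix_det continuous_id).continuousAt.tendsto).comp hS

lemma tendsto_mvnpdf {p : ℕ} {μr : ℕ → Fin p → ℝ} {Sr : ℕ → Matrix (Fin p) (Fin p) ℝ}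
    {μ : Fin p → ℝ} {S : Matrix (Fin p) (Fin p) ℝ} (hSpd : S.PosDef)
    (hμ : Tendsto μr atTop (𝓝 μ)) (hS : Tendsto Sr atTop (𝓝 S)) (x : Fin p → ℝ) :
    Tendsto (fun r => mvnpdf p x (μr r) (Sr r)) atTop (𝓝 (mvnpdf p x μ S)) := by
  unfold mvnpdf
  have hdet := tendsto_det hS
  have hrpow : Tendsto (fun r => (Sr r).det ^ (-(1:ℝ)/2)) atTop (𝓝 (S.det ^ (-(1:ℝ)/2))) :=
    ((Real.continuousAt_rpow_const _ _ (Or.inl hSpd.det_pos.ne')).tendsto).comp hdet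
  have hquad := tendsto_quad hμ (tendsto_inv_matrix hSpd.det_pos.ne' hS) x
  exact (tendsto_const_nhds.mul hrpow).mul
    ((Real.continuous_exp.continuousAt.tendsto).comp (tendsto_const_nhds.mul hquad))

lemma abs_quad_le (p : ℕ) (B : Matrix (Fin p) (Fin p) ℝ) (v : Fin p → ℝ) :
    |v ⬝ᵥ B *ᵥ v| ≤ (∑ i, ∑ j, |B i j|) * ∑ i, v i ^ 2 := by
  have hvN : ∀ i j, |v i| * |v j| ≤ ∑ l, v l ^ 2 := by
    intro i j
    have h1 : v i ^ 2 ≤ ∑ l, v l ^ 2 :=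
      Finset.single_le_sum (fun l _ => sq_nonneg (v l)) (Finset.mem_univ i)
    have h2 : v j ^ 2 ≤ ∑ l, v l ^ 2 :=
      Finset.single_le_sum (fun l _ => sq_nonneg (v l)) (Finset.mem_univ j)
    nlinarith [sq_abs (v i), sq_abs (v j), abs_nonneg (v i), abs_nonneg (v j),
      sq_nonneg (|v i| - |v j|)]
  have hexp : v ⬝ᵥ B *ᵥ v = ∑ i, v i * ∑ j, B i j * v j := by
    simp only [dotProduct, Matrix.mulVec]
  rw [hexp]
  calc |∑ i, v i * ∑ j, B i j * v j| ≤ ∑ i, |v i * ∑ j, B i j * v j| :=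
        Finset.abs_sum_le_sum_abs _ _
    _ ≤ ∑ i, (∑ j, |B i j|) * (∑ l, v l ^ 2) := by
        refine Finset.sum_le_sum fun i _ => ?_
        rw [abs_mul, Finset.sum_mul]
        calc |v i| * |∑ j, B i j * v j| ≤ |v i| * ∑ j, |B i j * v j| :=
              mul_le_mul_of_nonneg_left (Finset.abs_sum_le_sum_abs _ _) (abs_nonneg _)
          _ = ∑ j, |B i j| * (|v i| * |v j|) := by
              rw [Finset.mul_sum]; congr 1; ext j; rw [abs_mul]; ring
          _ ≤ ∑ j, |B i j| * (∑ l, v l ^ 2) :=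
              Finset.sum_le_sum fun j _ =>
                mul_le_mul_of_nonneg_left (hvN i j) (abs_nonneg _)
    _ = (∑ i, ∑ j, |B i j|) * ∑ l, v l ^ 2 := by rw [Finset.sum_mul]

lemma tendsto_sq_norm_sub_atTop {p : ℕ} (x : Fin p → ℝ) {μr : ℕ → Fin p → ℝ}
    (hμ : Tendsto (fun r => Real.sqrt (∑ i, (μr r i) ^ 2)) atTop atTop) :
    Tendsto (fun r => ∑ i, (x i - μr r i) ^ 2) atTop atTop := by
  set E := EuclideanSpace ℝ (Fin p) with hE
  have key : ∀ (v : E), ‖v‖ = Real.sqrt (∑ i, v i ^ 2) := fun v => by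
    rw [EuclideanSpace.norm_eq]
    simp [Real.norm_eq_abs, sq_abs]
  have hlow : ∀ r, Real.sqrt (∑ i, (μr r i) ^ 2) - Real.sqrt (∑ i, x i ^ 2)
      ≤ Real.sqrt (∑ i, (x i - μr r i) ^ 2) := by
    intro r
    let xE : E := WithLp.toLp 2 x
    let mE : E := WithLp.toLp 2 (μr r)
    have h1 : ‖mE‖ - ‖xE‖ ≤ ‖mE - xE‖ := norm_sub_norm_le _ _
    rw [key, key, key] at h1
    have h2 : ∑ i, (mE - xE) i ^ 2 = ∑ i, (x i - μr r i) ^ 2 := by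
      refine Finset.sum_congr rfl fun i _ => ?_
      have : (mE - xE) i = μr r i - x i := rfl
      rw [this]; ring
    rwa [h2] at h1
  have hsqrt : Tendsto (fun r => Real.sqrt (∑ i, (x i - μr r i) ^ 2)) atTop atTop :=
    tendsto_atTop_mono hlow (tendsto_atTop_add_const_right _ _ hμ)
  have hev : ∀ᶠ r in atTop, Real.sqrt (∑ i, (x i - μr r i) ^ 2)
      ≤ ∑ i, (x i - μr r i) ^ 2 := by
    filter_upwards [hsqrt.eventually_ge_atTop 1] with r hr
    calc Real.sqrt (∑ i, (x i - μr r i) ^ 2)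
        ≤ Real.sqrt (∑ i, (x i - μr r i) ^ 2) * Real.sqrt (∑ i, (x i - μr r i) ^ 2) := by
          nlinarith
      _ = ∑ i, (x i - μr r i) ^ 2 := Real.mul_self_sqrt (by positivity)
  exact tendsto_atTop_mono' _ hev hsqrt

lemma tendsto_mvnpdf_zero {p : ℕ} (hp : 0 < p) (x : Fin p → ℝ) {μr : ℕ → Fin p → ℝ}
    {Sr : ℕ → Matrix (Fin p) (Fin p) ℝ} {S : Matrix (Fin p) (Fin p) ℝ} (hSpd : S.PosDef)
    (hS : Tendsto Sr atTop (𝓝 S))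
    (hμ : Tendsto (fun r => Real.sqrt (∑ i, (μr r i) ^ 2)) atTop atTop) :
    Tendsto (fun r => mvnpdf p x (μr r) (Sr r)) atTop (𝓝 0) := by
  obtain ⟨c, hc, hq⟩ := quad_lower_bound hp hSpd.inv
  have hinv := tendsto_inv_matrix hSpd.det_pos.ne' hS
  have hs : Tendsto (fun r => ∑ i, ∑ j, |(Sr r)⁻¹ i j - S⁻¹ i j|) atTop (𝓝 0) := by
    have h1 : ∀ i j : Fin p, Tendsto (fun r => |(Sr r)⁻¹ i j - S⁻¹ i j|) atTop (𝓝 0) := by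
      intro i j
      have h2 := (tendsto_pi_nhds.mp ((tendsto_pi_nhds.mp hinv) i)) j
      simpa using (h2.sub (tendsto_const_nhds (x := S⁻¹ i j))).abs
    have := tendsto_finset_sum (Finset.univ : Finset (Fin p)) fun i _ =>
      tendsto_finset_sum (Finset.univ : Finset (Fin p)) fun j _ => h1 i j
    simpa using this
  have hN := tendsto_sq_norm_sub_atTop x hμ
  have hev : ∀ᶠ r in atTop, ∑ i, ∑ j, |(Sr r)⁻¹ i j - S⁻¹ i j| ≤ c / 2 :=
    hs.eventually_le_const (by linarith)
  have hQ : Tendsto (fun r => (x - μr r) ⬝ᵥ ((Sr r)⁻¹ *ᵥ (x - μr r))) atTop atTop := by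
    refine tendsto_atTop_mono' atTop ?_ (hN.const_mul_atTop (by linarith : (0:ℝ) < c / 2))
    filter_upwards [hev] with r hr
    set v : Fin p → ℝ := x - μr r with hv
    have hsplit : v ⬝ᵥ (Sr r)⁻¹ *ᵥ v = v ⬝ᵥ S⁻¹ *ᵥ v + v ⬝ᵥ ((Sr r)⁻¹ - S⁻¹) *ᵥ v := by
      rw [Matrix.sub_mulVec, dotProduct_sub]; ring
    have h2 := hq v
    have h3 := abs_quad_le p ((Sr r)⁻¹ - S⁻¹) v
    have h4 : (∑ i, ∑ j, |((Sr r)⁻¹ - S⁻¹) i j|) ≤ c / 2 := by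
      simpa [Matrix.sub_apply] using hr
    have hvsum : (∑ i, (x i - μr r i) ^ 2) = ∑ i, v i ^ 2 := rfl
    have h5 : |v ⬝ᵥ ((Sr r)⁻¹ - S⁻¹) *ᵥ v| ≤ (c / 2) * ∑ i, v i ^ 2 :=
      h3.trans (mul_le_mul_of_nonneg_right h4 (by positivity))
    have h6 := abs_le.mp h5
    show c / 2 * (∑ i, (x i - μr r i) ^ 2) ≤ v ⬝ᵥ (Sr r)⁻¹ *ᵥ v
    rw [hvsum, hsplit]
    linarith [h2, h6.1]
  have hexp : Tendsto
      (fun r => Real.exp (-(1 / 2) * ((x - μr r) ⬝ᵥ ((Sr r)⁻¹ *ᵥ (x - μr r)))))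
      atTop (𝓝 0) :=
    Real.tendsto_exp_atBot.comp (hQ.const_mul_atTop_of_neg (by norm_num))
  have hdetp : Tendsto (fun r => (Sr r).det ^ (-(1:ℝ)/2)) atTop
      (𝓝 (S.det ^ (-(1:ℝ)/2))) :=
    ((Real.continuousAt_rpow_const _ _ (Or.inl hSpd.det_pos.ne')).tendsto).comp
      (tendsto_det hS)
  have hfin := (tendsto_const_nhds (x := (2 * π) ^ (-(p:ℝ)/2))).mul hdetp |>.mul hexp
  unfold mvnpdf
  simpa using hfin

end Helpers

/-- the expected total mass assigned to the divergent components tends to 0: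
`E_P[Σ_{j=g+1}^k Z_j(X, θ^r)] → 0`. -/
theorem expected_assignment_of_divergent_components_tendsto_zero
    (p k : ℕ) (hp : 0 < p) (hk : 0 < k)
    (θseq : ℕ → MixParam p k)
    (hparam : ∀ r, IsMixParam p k (θseq r))
    -- mixing weights converge to strictly positive limits
    (wlim : Fin k → ℝ)
    (hw : ∀ j, Tendsto (fun r => (θseq r).1 j) atTop (𝓝 (wlim j)))
    (hwpos : ∀ j, 0 < wlim j)
    -- dispersion matrices converge to symmetric positive definite limits
    (Slim : Fin k → Matrix (Fin p) (Fin p) ℝ) (hSpd : ∀ j, (Slim j).PosDef)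
    (hS : ∀ j, Tendsto (fun r => (θseq r).2.2 j) atTop (𝓝 (Slim j)))
    -- the first g mean sequences converge, the remaining ones diverge in Euclidean norm
    (g : ℕ) (hg1 : 1 ≤ g) (hg2 : g < k)
    (mulim : Fin k → Fin p → ℝ)
    (hmu1 : ∀ j : Fin k, (j : ℕ) < g →
      Tendsto (fun r => (θseq r).2.1 j) atTop (𝓝 (mulim j)))
    (hmu2 : ∀ j : Fin k, g ≤ (j : ℕ) →
      Tendsto (fun r => Real.sqrt (∑ i, ((θseq r).2.1 j i) ^ 2)) atTop atTop)
    (P : Measure (Fin p → ℝ)) [IsProbabilityMeasure P] :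
    Tendsto
      (fun r => ∫ x, (∑ j : Fin k, if g ≤ (j : ℕ) then Zj p k (θseq r) x j else 0) ∂P)
      atTop (𝓝 0) := by
    classical
  set F : ℕ → (Fin p → ℝ) → ℝ :=
    fun r x => ∑ j : Fin k, if g ≤ (j : ℕ) then Zj p k (θseq r) x j else 0 with hF
  have hDjcont : ∀ (r : ℕ) (j : Fin k), Continuous fun x => Dj p k (θseq r) x j := fun r j =>
    continuous_const.mul (continuous_mvnpdf_x p _ _)
  have hmeasArg : ∀ (r : ℕ) (j : Fin k), MeasurableSet {x | IsArgMax p k (θseq r) x j} := by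
    intro r j
    have hset : {x | IsArgMax p k (θseq r) x j} =
        ⋂ i, {x | Dj p k (θseq r) x i ≤ Dj p k (θseq r) x j} := by
      ext x; simp [IsArgMax, Set.mem_iInter]
    rw [hset]
    exact MeasurableSet.iInter fun i =>
      measurableSet_le (hDjcont r i).measurable (hDjcont r j).measurable
  have hZmeas : ∀ (r : ℕ) (j : Fin k), Measurable fun x => Zj p k (θseq r) x j := by
    intro r j
    have heq : (fun x => Zj p k (θseq r) x j)
        = Set.indicator {x | IsArgMax p k (θseq r) x j} (fun _ => (1 : ℝ)) := by
      ext x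
      by_cases h : IsArgMax p k (θseq r) x j <;> simp [Zj, h, Set.indicator_apply]
    rw [heq]
    exact measurable_const.indicator (hmeasArg r j)
  have hFmeas : ∀ r, AEStronglyMeasurable (F r) P := by
    intro r
    refine (Finset.measurable_sum _ fun j _ => ?_).aestronglyMeasurable
    by_cases h : g ≤ (j : ℕ)
    · simpa [h] using hZmeas r j
    · simpa [h] using (measurable_const : Measurable fun _ : Fin p → ℝ => (0 : ℝ))
  have hZ01 : ∀ (r : ℕ) (x : Fin p → ℝ) (j : Fin k),
      0 ≤ Zj p k (θseq r) x j ∧ Zj p k (θseq r) x j ≤ 1 := by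
    intro r x j; unfold Zj; split <;> norm_num
  have hbound : ∀ r, ∀ᵐ x ∂P, ‖F r x‖ ≤ (k : ℝ) := by
    intro r
    refine Filter.Eventually.of_forall fun x => ?_
    have h0 : 0 ≤ F r x := Finset.sum_nonneg fun j _ => by
      by_cases h : g ≤ (j : ℕ) <;> simp [h, (hZ01 r x j).1]
    have h1 : F r x ≤ (k : ℝ) := by
      calc F r x ≤ ∑ _j : Fin k, (1 : ℝ) := Finset.sum_le_sum fun j _ => by
            by_cases h : g ≤ (j : ℕ) <;> simp [h, (hZ01 r x j).2]
        _ = (k : ℝ) := by simp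
    rw [Real.norm_eq_abs, abs_of_nonneg h0]; exact h1
  have hlim : ∀ᵐ x ∂P, Tendsto (fun r => F r x) atTop (𝓝 0) := by
    refine Filter.Eventually.of_forall fun x => ?_
    have hj0lt : ((⟨0, hk⟩ : Fin k) : ℕ) < g := by simp; omega
    set j0 : Fin k := ⟨0, hk⟩ with hj0
    have hLj0 : Tendsto (fun r => Dj p k (θseq r) x j0) atTop
        (𝓝 (wlim j0 * mvnpdf p x (mulim j0) (Slim j0))) := by
      unfold Dj
      exact (hw j0).mul (tendsto_mvnpdf (hSpd j0) (hmu1 j0 hj0lt) (hS j0) x)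
    have hLpos : 0 < wlim j0 * mvnpdf p x (mulim j0) (Slim j0) := by
      refine mul_pos (hwpos j0) ?_
      unfold mvnpdf
      exact mul_pos (mul_pos (Real.rpow_pos_of_pos (by positivity) _)
        (Real.rpow_pos_of_pos (hSpd j0).det_pos _)) (Real.exp_pos _)
    have hzero : ∀ j : Fin k, g ≤ (j : ℕ) →
        Tendsto (fun r => Dj p k (θseq r) x j) atTop (𝓝 0) := by
      intro j hj
      have := (hw j).mul (tendsto_mvnpdf_zero hp x (hSpd j) (hS j) (hmu2 j hj))
      unfold Dj
      simpa using this
    have hev : ∀ᶠ r in atTop, ∀ j : Fin k, g ≤ (j : ℕ) →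
        Dj p k (θseq r) x j < Dj p k (θseq r) x j0 := by
      rw [Filter.eventually_all]
      intro j
      by_cases hj : g ≤ (j : ℕ)
      · exact ((hzero j hj).eventually_lt hLj0 hLpos).mono fun r h _ => h
      · exact Filter.Eventually.of_forall fun r h => absurd h hj
    refine tendsto_const_nhds.congr' ?_
    filter_upwards [hev] with r hr
    show (0 : ℝ) = F r x
    symm
    refine Finset.sum_eq_zero fun j _ => ?_
    by_cases hj : g ≤ (j : ℕ)
    · simp only [hj, if_true]
      unfold Zj
      rw [if_neg]
      intro hmax
      exact absurd (hmax j0) (not_le.mpr (hr j hj))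
    · simp [hj]
  have hdct := tendsto_integral_of_dominated_convergence (μ := P) (F := F)
      (f := fun _ => (0 : ℝ)) (fun _ => (k : ℝ)) hFmeas (integrable_const _) hbound hlim
  simpa using hdct
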